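/- Let Δ > 2J, K ∈ ℕ, δ ∈ (0,1), N ∈ {1,…,2JL}, let W be a diagonal matrix on ℂ^{S_L^N} with nonnegative entries, and set γ = (1 − 2J/Δ)K and E_{K,δ/2} = (1 − 2J/Δ)(K + 1 − δ/2). Then for every E ∈ [0, E_{K,δ/2}] and every f : S_L^N → ℂ, ⟨f, (H_N + W + γ P_{S_{L,K}^N} − E) f⟩ ≥ (1 − 2J/Δ) · (δ/(2(K+1))) · ⟨f, V_N f⟩; in particular H_N + W + γ P_{S_{L,K}^N} − E is positive definite. -/

import Mathlib

open scoped Classical ComplexOrder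
open Matrix

/-- The interaction potential `V(m) = ∑_{j=1}^{L-1}[J(m(j)+m(j+1)) − m(j)m(j+1)] + J(m(1)+m(L))`,
where `J = twoJ/2`. Sites are labeled `1,…,L`. -/
noncomputable def potV (twoJ L : ℕ) (m : ℕ → ℕ) : ℝ :=
  (∑ j ∈ Finset.Icc 1 (L - 1),
      ((twoJ : ℝ) / 2 * ((m j : ℝ) + (m (j + 1) : ℝ)) - (m j : ℝ) * (m (j + 1) : ℝ)))
    + (twoJ : ℝ) / 2 * ((m 1 : ℝ) + (m L : ℝ))

/-- Adjacency of occupation functions: one particle hops between neighboring sites. -/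
def adjC (L : ℕ) (m n : ℕ → ℕ) : Prop :=
  ∃ j₀ ∈ Finset.Icc 1 (L - 1),
    (((m j₀ : ℤ) - (n j₀ : ℤ) = 1 ∧ (m (j₀ + 1) : ℤ) - (n (j₀ + 1) : ℤ) = -1) ∨
     ((m j₀ : ℤ) - (n j₀ : ℤ) = -1 ∧ (m (j₀ + 1) : ℤ) - (n (j₀ + 1) : ℤ) = 1)) ∧
    ∀ j, j ≠ j₀ → j ≠ j₀ + 1 → m j = n j

/-- The hopping weight `w(m,n) = ∏_{j : m(j) ≠ n(j)} (J(m(j)+n(j)+1) − m(j)n(j))^{1/2}`. -/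
noncomputable def wt (twoJ L : ℕ) (m n : ℕ → ℕ) : ℝ :=
  ∏ j ∈ (Finset.Icc 1 L).filter (fun j => m j ≠ n j),
    Real.sqrt ((twoJ : ℝ) / 2 * ((m j : ℝ) + (n j : ℝ) + 1) - (m j : ℝ) * (n j : ℝ))

/-- The occupation function `m_X : {1,…,L} → ℕ` of a tuple `X` with values in `Fin L`. -/
noncomputable def occt {L N : ℕ} (X : Fin N → Fin L) : ℕ → ℕ :=
  fun s => (Finset.univ.filter (fun i => (X i : ℕ) + 1 = s)).card

/-- `X ∈ S_L^N`: nondecreasing and no site occupied by more than `2J` particles. -/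
def isConf (twoJ : ℕ) {L N : ℕ} (X : Fin N → Fin L) : Prop :=
  Monotone X ∧ ∀ (k : ℕ) (hk : k < N) (h : k + twoJ < N),
    (X ⟨k, hk⟩ : ℕ) + 1 ≤ (X ⟨k + twoJ, h⟩ : ℕ)

/-- The set `S_L^N` as a finset. -/
noncomputable def confs (twoJ L N : ℕ) : Finset (Fin N → Fin L) :=
  Finset.univ.filter (fun X => isConf twoJ X)

/-- The index type `S_L^N`. -/
abbrev Conf (twoJ L N : ℕ) := {X : Fin N → Fin L // X ∈ confs twoJ L N}

/-- The Hamiltonian `H_N = −(1/(2Δ)) A_N + V_N` on `ℂ^{S_L^N}`. -/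
noncomputable def Ham (twoJ L N : ℕ) (Δ : ℝ) : Matrix (Conf twoJ L N) (Conf twoJ L N) ℂ :=
  fun X Y =>
    (if adjC L (occt X.1) (occt Y.1)
      then -(1 / (2 * (Δ : ℂ))) * ((wt twoJ L (occt X.1) (occt Y.1) : ℝ) : ℂ) else 0)
    + (if X = Y then ((potV twoJ L (occt X.1) : ℝ) : ℂ) else 0)

/-- The diagonal matrix `V_N`. -/
noncomputable def Vdiag (twoJ L N : ℕ) : Matrix (Conf twoJ L N) (Conf twoJ L N) ℂ :=
  Matrix.diagonal (fun X => ((potV twoJ L (occt X.1) : ℝ) : ℂ))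

/-- The orthogonal projection `P_{S_{L,K}^N}` onto configurations with `V(X) ≤ K`. -/
noncomputable def projLK (twoJ L N K : ℕ) : Matrix (Conf twoJ L N) (Conf twoJ L N) ℂ :=
  Matrix.diagonal (fun X => if potV twoJ L (occt X.1) ≤ (K : ℝ) then (1 : ℂ) else 0)


namespace DropletAux

open Finset

lemma wt_nonneg (q L : ℕ) (m n : ℕ → ℕ) : 0 ≤ wt q L m n :=
  Finset.prod_nonneg fun _ _ => Real.sqrt_nonneg _

lemma wt_symm (q L : ℕ) (m n : ℕ → ℕ) : wt q L m n = wt q L n m := by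
  unfold wt
  have h : (Finset.Icc 1 L).filter (fun j => m j ≠ n j)
      = (Finset.Icc 1 L).filter (fun j => n j ≠ m j) :=
    Finset.filter_congr fun j _ => by simp [ne_comm]
  rw [h]
  exact Finset.prod_congr rfl fun j _ => by congr 1; ring

lemma adjC_symm {L : ℕ} {m n : ℕ → ℕ} (h : adjC L m n) : adjC L n m := by
  obtain ⟨j, hj, hd, he⟩ := h
  exact ⟨j, hj, by omega, fun s h1 h2 => (he s h1 h2).symm⟩

lemma adjC_irrefl (L : ℕ) (m : ℕ → ℕ) : ¬ adjC L m m := by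
  rintro ⟨j, hj, hd, he⟩; omega

/-- one-particle hop of an occupation function -/
def hopF (m : ℕ → ℕ) (j : ℕ) (d : Bool) : ℕ → ℕ := fun s =>
  if s = j then (if d then m j - 1 else m j + 1)
  else if s = j + 1 then (if d then m (j + 1) + 1 else m (j + 1) - 1)
  else m s

lemma hopF_self_t (m : ℕ → ℕ) (j : ℕ) : hopF m j true j = m j - 1 := by simp [hopF]

lemma hopF_self_f (m : ℕ → ℕ) (j : ℕ) : hopF m j false j = m j + 1 := by simp [hopF]

lemma hopF_succ_t (m : ℕ → ℕ) (j : ℕ) : hopF m j true (j + 1) = m (j + 1) + 1 := by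
  simp only [hopF]; rw [if_neg (by omega)]; simp

lemma hopF_succ_f (m : ℕ → ℕ) (j : ℕ) : hopF m j false (j + 1) = m (j + 1) - 1 := by
  simp only [hopF]; rw [if_neg (by omega)]; simp

lemma hopF_other (m : ℕ → ℕ) (j : ℕ) (d : Bool) {s : ℕ} (h1 : s ≠ j) (h2 : s ≠ j + 1) :
    hopF m j d s = m s := by simp only [hopF, if_neg h1, if_neg h2]

lemma adjC_elim {L : ℕ} {m n : ℕ → ℕ} (h : adjC L m n) :
    ∃ j ∈ Finset.Icc 1 (L - 1), ∃ d : Bool, n = hopF m j d ∧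
      (d = true → 1 ≤ m j) ∧ (d = false → 1 ≤ m (j + 1)) := by
  obtain ⟨j, hj, hd, he⟩ := h
  refine ⟨j, hj, ?_⟩
  rcases hd with ⟨h1, h2⟩ | ⟨h1, h2⟩
  · refine ⟨true, funext fun s => ?_, fun _ => by omega, fun h => by simp at h⟩
    by_cases hs : s = j
    · subst hs; rw [hopF_self_t]; omega
    · by_cases hs2 : s = j + 1
      · subst hs2; rw [hopF_succ_t]; omega
      · rw [hopF_other m j true hs hs2]; exact (he s hs hs2).symm
  · refine ⟨false, funext fun s => ?_, fun h => by simp at h, fun _ => by omega⟩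
    by_cases hs : s = j
    · subst hs; rw [hopF_self_f]; omega
    · by_cases hs2 : s = j + 1
      · subst hs2; rw [hopF_succ_f]; omega
      · rw [hopF_other m j false hs hs2]; exact (he s hs hs2).symm

end DropletAux
namespace DropletAux

open Finset

/-- A down-closed set of `Fin N` is an initial segment. -/
lemma downset_mem_iff {N : ℕ} (S : Finset (Fin N))
    (hdc : ∀ i j : Fin N, i ≤ j → j ∈ S → i ∈ S) (i : Fin N) :
    i ∈ S ↔ (i : ℕ) < S.card := by
  constructor
  · intro hi
    have hsub : Finset.range ((i : ℕ) + 1) ⊆ Finset.image (fun k : Fin N => (k : ℕ)) S := by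
      intro t ht
      simp only [Finset.mem_range] at ht
      have htN : t < N := lt_of_le_of_lt (by omega) i.2
      refine Finset.mem_image.2 ⟨⟨t, htN⟩, ?_, rfl⟩
      exact hdc ⟨t, htN⟩ i (Fin.le_def.2 (by simp; omega)) hi
    have := Finset.card_le_card hsub
    rw [Finset.card_range] at this
    have himg : (Finset.image (fun k : Fin N => (k : ℕ)) S).card = S.card :=
      Finset.card_image_of_injective _ Fin.val_injective
    omega
  · intro hi
    by_contra hni
    have hsub : S ⊆ Finset.univ.filter (fun k : Fin N => (k : ℕ) < (i : ℕ)) := by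
      intro k hk
      simp only [Finset.mem_filter, Finset.mem_univ, true_and]
      by_contra hlt
      exact hni (hdc i k (Fin.le_def.2 (by omega)) hk)
    have h2 : (Finset.univ.filter (fun k : Fin N => (k : ℕ) < (i : ℕ))).card ≤ (i : ℕ) := by
      have : Finset.image (fun k : Fin N => (k : ℕ))
          (Finset.univ.filter (fun k : Fin N => (k : ℕ) < (i : ℕ))) ⊆ Finset.range (i : ℕ) := by
        intro t ht
        simp only [Finset.mem_image, Finset.mem_filter] at ht
        obtain ⟨k, ⟨_, hk⟩, rfl⟩ := ht
        simpa using hk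
      have := Finset.card_le_card this
      rwa [Finset.card_range, Finset.card_image_of_injective _ Fin.val_injective] at this
    have := Finset.card_le_card hsub
    omega

/-- counting values `≤ v` via occupation numbers -/
lemma card_le_eq_sum_occt {L N : ℕ} (X : Fin N → Fin L) (v : ℕ) :
    (Finset.univ.filter (fun i => (X i : ℕ) ≤ v)).card
      = ∑ s ∈ Finset.Icc 1 (v + 1), occt X s := by
  have h := Finset.card_eq_sum_card_fiberwise
    (f := fun i : Fin N => (X i : ℕ) + 1)
    (s := Finset.univ.filter (fun i => (X i : ℕ) ≤ v))
    (t := Finset.Icc 1 (v + 1))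
    (fun x hx => by simp only [Finset.mem_coe, Finset.mem_filter] at hx; simp [Finset.mem_Icc]; omega)
  rw [h]
  refine Finset.sum_congr rfl fun s hs => ?_
  simp only [Finset.mem_Icc] at hs
  unfold occt
  congr 1
  rw [Finset.filter_filter]
  refine Finset.filter_congr fun i _ => ?_
  constructor
  · rintro ⟨_, h2⟩; exact h2
  · intro h2; exact ⟨by omega, h2⟩

/-- a monotone tuple is determined by its occupation function -/
lemma monotone_eq_of_occt {L N : ℕ} {X Y : Fin N → Fin L} (hX : Monotone X) (hY : Monotone Y)
    (h : occt X = occt Y) : X = Y := by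
  have key : ∀ (X' Y' : Fin N → Fin L), Monotone X' → Monotone Y' → occt X' = occt Y' →
      ∀ i, ¬ ((X' i : ℕ) < (Y' i : ℕ)) := by
    intro X' Y' hX' hY' h' i hlt
    set v := (X' i : ℕ) with hv
    set SX := Finset.univ.filter (fun j => (X' j : ℕ) ≤ v) with hSX
    set SY := Finset.univ.filter (fun j => (Y' j : ℕ) ≤ v) with hSY
    have hcard : SX.card = SY.card := by
      rw [hSX, hSY, card_le_eq_sum_occt, card_le_eq_sum_occt, h']
    have hdcX : ∀ a b : Fin N, a ≤ b → b ∈ SX → a ∈ SX := by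
      intro a b hab hb
      simp only [hSX, Finset.mem_filter, Finset.mem_univ, true_and] at hb ⊢
      exact le_trans (hX' hab) hb
    have hdcY : ∀ a b : Fin N, a ≤ b → b ∈ SY → a ∈ SY := by
      intro a b hab hb
      simp only [hSY, Finset.mem_filter, Finset.mem_univ, true_and] at hb ⊢
      exact le_trans (hY' hab) hb
    have hiX : i ∈ SX := by
      rw [hSX]
      exact Finset.mem_filter.2 ⟨Finset.mem_univ _, le_rfl⟩
    have h1 := (downset_mem_iff SX hdcX i).1 hiX
    have h2 := (downset_mem_iff SY hdcY i).2 (by omega)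
    simp only [hSY, Finset.mem_filter, Finset.mem_univ, true_and] at h2
    omega
  funext i
  have h1 := key X Y hX hY h i
  have h2 := key Y X hY hX h.symm i
  exact Fin.ext (by omega)

/-- occupation numbers of valid configurations are at most `2J` -/
lemma occt_le_of_conf {q L N : ℕ} {X : Fin N → Fin L} (hX : isConf q X) (s : ℕ) :
    occt X s ≤ q := by
  by_contra hc
  push_neg at hc
  set T := Finset.univ.filter (fun i : Fin N => (X i : ℕ) + 1 = s) with hT
  have hcard : q + 1 ≤ T.card := hc
  have hne : T.Nonempty := Finset.card_pos.1 (by omega)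
  set i0 := T.min' hne with hi0
  set i1 := T.max' hne with hi1
  have hm0 : i0 ∈ T := T.min'_mem hne
  have hm1 : i1 ∈ T := T.max'_mem hne
  have hsub : T ⊆ Finset.Icc i0 i1 := fun k hk =>
    Finset.mem_Icc.2 ⟨T.min'_le k hk, T.le_max' k hk⟩
  have hIcc : (Finset.Icc i0 i1).card = (i1 : ℕ) + 1 - (i0 : ℕ) := Fin.card_Icc i0 i1
  have hcard2 := Finset.card_le_card hsub
  have hgap : (i0 : ℕ) + q ≤ (i1 : ℕ) := by omega
  have hlt : (i0 : ℕ) + q < N := by have := i1.2; omega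
  have hcond := hX.2 (i0 : ℕ) i0.2 hlt
  have hmono := hX.1 (show (⟨(i0 : ℕ) + q, hlt⟩ : Fin N) ≤ i1 from Fin.le_def.2 (by simp; omega))
  simp only [hT, Finset.mem_filter] at hm0 hm1
  have : (X ⟨(i0 : ℕ), i0.2⟩ : ℕ) = (X i0 : ℕ) := by congr
  rw [Fin.le_def] at hmono
  omega

/-- total occupation is `N` -/
lemma sum_occt {L N : ℕ} (X : Fin N → Fin L) (hL : 1 ≤ L) :
    ∑ s ∈ Finset.Icc 1 L, occt X s = N := by
  have h := Finset.card_eq_sum_card_fiberwise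
    (f := fun i : Fin N => (X i : ℕ) + 1)
    (s := (Finset.univ : Finset (Fin N)))
    (t := Finset.Icc 1 L)
    (fun x _ => by simp [Finset.mem_Icc])
  simp only [Finset.card_univ, Fintype.card_fin] at h
  unfold occt
  exact h.symm

end DropletAux
namespace DropletAux

open Finset

lemma sum_Icc_top {L : ℕ} (hL : 1 ≤ L) (g : ℕ → ℝ) :
    ∑ j ∈ Finset.Icc 1 L, g j = (∑ j ∈ Finset.Icc 1 (L - 1), g j) + g L := by
  have h : Finset.Icc 1 L = insert L (Finset.Icc 1 (L - 1)) := by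
    ext k; simp only [Finset.mem_Icc, Finset.mem_insert]; omega
  rw [h, Finset.sum_insert (by simp only [Finset.mem_Icc]; omega)]
  ring

lemma sum_Icc_bot {L : ℕ} (hL : 1 ≤ L) (g : ℕ → ℝ) :
    ∑ j ∈ Finset.Icc 1 L, g j = g 1 + ∑ j ∈ Finset.Icc 1 (L - 1), g (j + 1) := by
  have h : Finset.Icc 1 L = insert 1 ((Finset.Icc 1 (L - 1)).image (· + 1)) := by
    ext k
    simp only [Finset.mem_Icc, Finset.mem_insert, Finset.mem_image]
    constructor
    · intro hk
      by_cases h1 : k = 1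
      · left; exact h1
      · right; exact ⟨k - 1, by omega⟩
    · rintro (rfl | ⟨a, ha, rfl⟩) <;> omega
  rw [h, Finset.sum_insert (by simp only [Finset.mem_image, Finset.mem_Icc]; rintro ⟨a, _, _⟩; omega),
    Finset.sum_image (fun a _ b _ h => by omega)]

lemma potV_eq (q L : ℕ) (hL : 2 ≤ L) (m : ℕ → ℕ) :
    potV q L m = (q : ℝ) * (∑ s ∈ Finset.Icc 1 L, (m s : ℝ))
      - ∑ j ∈ Finset.Icc 1 (L - 1), (m j : ℝ) * (m (j + 1) : ℝ) := by
  unfold potV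
  have e1 : ∑ j ∈ Finset.Icc 1 (L - 1),
      ((q : ℝ) / 2 * ((m j : ℝ) + (m (j + 1) : ℝ)) - (m j : ℝ) * (m (j + 1) : ℝ))
      = (q : ℝ) / 2 * (∑ j ∈ Finset.Icc 1 (L - 1), (m j : ℝ))
        + (q : ℝ) / 2 * (∑ j ∈ Finset.Icc 1 (L - 1), (m (j + 1) : ℝ))
        - ∑ j ∈ Finset.Icc 1 (L - 1), (m j : ℝ) * (m (j + 1) : ℝ) := by
    rw [Finset.sum_sub_distrib, Finset.mul_sum, Finset.mul_sum, ← Finset.sum_add_distrib]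
    congr 1
    exact Finset.sum_congr rfl fun j _ => by ring
  have e2 := sum_Icc_top (by omega : 1 ≤ L) (fun s => (m s : ℝ))
  have e3 := sum_Icc_bot (by omega : 1 ≤ L) (fun s => (m s : ℝ))
  rw [e1, show (∑ j ∈ Finset.Icc 1 (L - 1), (m j : ℝ))
      = (∑ j ∈ Finset.Icc 1 L, (m j : ℝ)) - (m L : ℝ) from by linarith,
    show (∑ j ∈ Finset.Icc 1 (L - 1), (m (j + 1) : ℝ))
      = (∑ j ∈ Finset.Icc 1 L, (m j : ℝ)) - (m 1 : ℝ) from by linarith]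
  ring

lemma bond_nonneg {q a b : ℕ} (ha : a ≤ q) (hb : b ≤ q) :
    0 ≤ (q : ℝ) / 2 * ((a : ℝ) + (b : ℝ)) - (a : ℝ) * (b : ℝ) := by
  have ha' : (a : ℝ) ≤ q := by exact_mod_cast ha
  have hb' : (b : ℝ) ≤ q := by exact_mod_cast hb
  have ha0 : (0 : ℝ) ≤ a := Nat.cast_nonneg a
  have hb0 : (0 : ℝ) ≤ b := Nat.cast_nonneg b
  nlinarith [mul_nonneg ha0 (sub_nonneg.2 hb'), mul_nonneg hb0 (sub_nonneg.2 ha')]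

lemma potV_pos {q L N : ℕ} (hq : 1 ≤ q) (hL : 2 ≤ L) (hN : 1 ≤ N) {X : Fin N → Fin L}
    (hX : isConf q X) : 0 < potV q L (occt X) := by
  set m := occt X with hm
  have hocc : ∀ s, m s ≤ q := occt_le_of_conf hX
  have hbond : ∀ j ∈ Finset.Icc 1 (L - 1),
      0 ≤ (q : ℝ) / 2 * ((m j : ℝ) + (m (j + 1) : ℝ)) - (m j : ℝ) * (m (j + 1) : ℝ) :=
    fun j _ => bond_nonneg (hocc j) (hocc (j + 1))
  have hsum0 : 0 ≤ ∑ j ∈ Finset.Icc 1 (L - 1),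
      ((q : ℝ) / 2 * ((m j : ℝ) + (m (j + 1) : ℝ)) - (m j : ℝ) * (m (j + 1) : ℝ)) :=
    Finset.sum_nonneg hbond
  have hq' : (1 : ℝ) ≤ q := by exact_mod_cast hq
  -- there is an occupied site
  have hi0 : 0 < N := hN
  set i : Fin N := ⟨0, hi0⟩ with hi
  set s0 := (X i : ℕ) + 1 with hs0
  have hms0 : 1 ≤ m s0 := by
    rw [hm]
    unfold occt
    refine Finset.card_pos.2 ⟨i, ?_⟩
    simp [hs0]
  have hs0mem : s0 ∈ Finset.Icc 1 L := by
    simp only [Finset.mem_Icc]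
    exact ⟨by omega, (X i).2⟩
  by_cases hcase : 1 ≤ m 1 + m L
  · -- boundary term is positive
    have hb1 : (1 : ℝ) ≤ (m 1 : ℝ) + (m L : ℝ) := by
      have : (1 : ℝ) ≤ ((m 1 + m L : ℕ) : ℝ) := by exact_mod_cast hcase
      push_cast at this; linarith
    unfold potV
    nlinarith
  · push_neg at hcase
    have hm1 : m 1 = 0 := by omega
    have hmL : m L = 0 := by
      have hsL : s0 ≤ L := by simp only [Finset.mem_Icc] at hs0mem; exact hs0mem.2
      omega
    set B := (Finset.Icc 1 L).filter (fun s => 1 ≤ m s) with hB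
    have hBne : B.Nonempty := ⟨s0, by rw [hB]; exact Finset.mem_filter.2 ⟨hs0mem, hms0⟩⟩
    set sm := B.min' hBne with hsm
    have hsmem : sm ∈ B := B.min'_mem hBne
    rw [hB, Finset.mem_filter, Finset.mem_Icc] at hsmem
    obtain ⟨⟨hsm1, hsmL⟩, hsmocc⟩ := hsmem
    have hsmne1 : sm ≠ 1 := fun h => by rw [h] at hsmocc; omega
    have hsmneL : sm ≠ L := fun h => by rw [h] at hsmocc; omega
    have hprev : m (sm - 1) = 0 := by
      by_contra hc
      have hmem : sm - 1 ∈ B := by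
        rw [hB, Finset.mem_filter, Finset.mem_Icc]
        exact ⟨⟨by omega, by omega⟩, by omega⟩
      have := B.min'_le _ hmem
      omega
    set j := sm - 1 with hj
    have hjmem : j ∈ Finset.Icc 1 (L - 1) := by
      simp only [Finset.mem_Icc]; omega
    have hjsucc : j + 1 = sm := by omega
    have hterm : (q : ℝ) / 2 ≤
        (q : ℝ) / 2 * ((m j : ℝ) + (m (j + 1) : ℝ)) - (m j : ℝ) * (m (j + 1) : ℝ) := by
      rw [hjsucc]
      have h0 : (m j : ℝ) = 0 := by rw [hj]; exact_mod_cast hprev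
      rw [hj] at h0
      have h1 : (1 : ℝ) ≤ (m sm : ℝ) := by exact_mod_cast hsmocc
      rw [h0]
      nlinarith
    have hsingle := Finset.single_le_sum hbond hjmem
    unfold potV
    rw [hm1, hmL]
    push_cast
    nlinarith

lemma potV_exists_int {q L N : ℕ} (hL : 2 ≤ L) (X : Fin N → Fin L) :
    ∃ z : ℤ, potV q L (occt X) = (z : ℝ) := by
  refine ⟨(q : ℤ) * N - ∑ j ∈ Finset.Icc 1 (L - 1), ((occt X j : ℤ) * (occt X (j + 1) : ℤ)), ?_⟩
  rw [potV_eq q L hL]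
  have hs : ∑ s ∈ Finset.Icc 1 L, ((occt X s : ℝ)) = (N : ℝ) := by
    rw [← Nat.cast_sum, sum_occt X (by omega)]
  rw [hs]
  push_cast
  ring

lemma potV_ge_one {q L N : ℕ} (hq : 1 ≤ q) (hL : 2 ≤ L) (hN : 1 ≤ N) {X : Fin N → Fin L}
    (hX : isConf q X) : 1 ≤ potV q L (occt X) := by
  obtain ⟨z, hz⟩ := potV_exists_int (q := q) hL X
  have hpos := potV_pos hq hL hN hX
  rw [hz] at hpos ⊢
  have : 0 < z := by exact_mod_cast hpos
  exact_mod_cast this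

lemma potV_gt_imp {q L N K : ℕ} (hL : 2 ≤ L) (X : Fin N → Fin L)
    (h : ¬ potV q L (occt X) ≤ (K : ℝ)) : (K : ℝ) + 1 ≤ potV q L (occt X) := by
  obtain ⟨z, hz⟩ := potV_exists_int (q := q) hL X
  rw [hz] at h ⊢
  push_neg at h
  have : (K : ℤ) < z := by exact_mod_cast h
  have : (K : ℤ) + 1 ≤ z := this
  exact_mod_cast this

end DropletAux
namespace DropletAux

open Finset

lemma sqrt_bound {q a b : ℕ} (hq : 1 ≤ q) (ha1 : 1 ≤ a) (haq : a ≤ q) (hbq : b + 1 ≤ q) :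
    Real.sqrt ((a : ℝ) * ((q : ℝ) - a + 1)) * Real.sqrt (((b : ℝ) + 1) * ((q : ℝ) - b))
      ≤ (q : ℝ) * a * ((q : ℝ) - b) := by
  have ha1' : (1 : ℝ) ≤ a := by exact_mod_cast ha1
  have haq' : (a : ℝ) ≤ q := by exact_mod_cast haq
  have hbq' : (b : ℝ) + 1 ≤ q := by exact_mod_cast hbq
  have hb0 : (0 : ℝ) ≤ b := Nat.cast_nonneg b
  have hq1 : (1 : ℝ) ≤ q := by exact_mod_cast hq
  have h1 : 0 ≤ (a : ℝ) * ((q : ℝ) - a + 1) := by nlinarith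
  have h2 : 0 ≤ ((b : ℝ) + 1) * ((q : ℝ) - b) := by nlinarith
  have hrhs : 0 ≤ (q : ℝ) * a * ((q : ℝ) - b) := mul_nonneg (mul_nonneg (by linarith) (by linarith)) (by linarith)
  rw [← Real.sqrt_mul h1]
  have f1 : (a : ℝ) * ((q : ℝ) - a + 1) ≤ a * q := by nlinarith
  have f2 : ((b : ℝ) + 1) * ((q : ℝ) - b) ≤ q * ((q : ℝ) - b) := by nlinarith
  have ht : (1 : ℝ) ≤ (a : ℝ) * ((q : ℝ) - b) := by nlinarith
  have key : (a : ℝ) * ((q : ℝ) - a + 1) * (((b : ℝ) + 1) * ((q : ℝ) - b))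
      ≤ ((q : ℝ) * a * ((q : ℝ) - b)) ^ 2 := by
    have e1 : (a : ℝ) * ((q : ℝ) - a + 1) * (((b : ℝ) + 1) * ((q : ℝ) - b))
        ≤ ((a : ℝ) * q) * ((q : ℝ) * ((q : ℝ) - b)) :=
      mul_le_mul f1 f2 h2 (by nlinarith)
    have e2 : ((a : ℝ) * q) * ((q : ℝ) * ((q : ℝ) - b)) ≤ ((q : ℝ) * a * ((q : ℝ) - b)) ^ 2 := by
      nlinarith [mul_nonneg hrhs (sub_nonneg.2 ht)]
    linarith
  calc Real.sqrt ((a : ℝ) * ((q : ℝ) - a + 1) * (((b : ℝ) + 1) * ((q : ℝ) - b)))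
      ≤ Real.sqrt (((q : ℝ) * a * ((q : ℝ) - b)) ^ 2) := Real.sqrt_le_sqrt key
    _ = (q : ℝ) * a * ((q : ℝ) - b) := Real.sqrt_sq hrhs

lemma wt_hop_t {q L : ℕ} (m : ℕ → ℕ) {j : ℕ} (hj : j ∈ Finset.Icc 1 (L - 1)) (hL : 2 ≤ L)
    (ha : 1 ≤ m j) :
    wt q L m (hopF m j true) = Real.sqrt ((m j : ℝ) * ((q : ℝ) - m j + 1))
      * Real.sqrt (((m (j + 1) : ℝ) + 1) * ((q : ℝ) - m (j + 1))) := by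
  simp only [Finset.mem_Icc] at hj
  have hne : j ≠ j + 1 := by omega
  have hfil : (Finset.Icc 1 L).filter (fun s => m s ≠ hopF m j true s) = {j, j + 1} := by
    ext s
    simp only [Finset.mem_filter, Finset.mem_Icc, Finset.mem_insert, Finset.mem_singleton]
    constructor
    · rintro ⟨hs, hne2⟩
      by_contra hc
      push_neg at hc
      exact hne2 (hopF_other m j true hc.1 hc.2).symm
    · rintro (rfl | rfl)
      · exact ⟨⟨by omega, by omega⟩, by rw [hopF_self_t]; omega⟩
      · exact ⟨⟨by omega, by omega⟩, by rw [hopF_succ_t]; omega⟩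
  unfold wt
  rw [hfil, Finset.prod_pair hne]
  congr 1
  · congr 1
    rw [hopF_self_t, Nat.cast_sub ha]
    push_cast
    ring
  · congr 1
    rw [hopF_succ_t]
    push_cast
    ring

lemma wt_hop_f {q L : ℕ} (m : ℕ → ℕ) {j : ℕ} (hj : j ∈ Finset.Icc 1 (L - 1)) (hL : 2 ≤ L)
    (hb : 1 ≤ m (j + 1)) :
    wt q L m (hopF m j false) = Real.sqrt (((m j : ℝ) + 1) * ((q : ℝ) - m j))
      * Real.sqrt ((m (j + 1) : ℝ) * ((q : ℝ) - m (j + 1) + 1)) := by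
  simp only [Finset.mem_Icc] at hj
  have hne : j ≠ j + 1 := by omega
  have hfil : (Finset.Icc 1 L).filter (fun s => m s ≠ hopF m j false s) = {j, j + 1} := by
    ext s
    simp only [Finset.mem_filter, Finset.mem_Icc, Finset.mem_insert, Finset.mem_singleton]
    constructor
    · rintro ⟨hs, hne2⟩
      by_contra hc
      push_neg at hc
      exact hne2 (hopF_other m j false hc.1 hc.2).symm
    · rintro (rfl | rfl)
      · exact ⟨⟨by omega, by omega⟩, by rw [hopF_self_f]; omega⟩
      · exact ⟨⟨by omega, by omega⟩, by rw [hopF_succ_f]; omega⟩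
  unfold wt
  rw [hfil, Finset.prod_pair hne]
  congr 1
  · congr 1
    rw [hopF_self_f]
    push_cast
    ring
  · congr 1
    rw [hopF_succ_f, Nat.cast_sub hb]
    push_cast
    ring

end DropletAux
namespace DropletAux

open Finset

lemma S_bound (q L N : ℕ) (hq : 1 ≤ q) (hL : 2 ≤ L) (X : Conf q L N) :
    (∑ Y : Conf q L N, if adjC L (occt X.1) (occt Y.1) then wt q L (occt X.1) (occt Y.1) else 0)
      ≤ 2 * (q : ℝ) * potV q L (occt X.1) := by
  classical
  set m := occt X.1 with hm
  have hXconf : isConf q X.1 := (Finset.mem_filter.1 X.2).2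
  have hocc : ∀ s, m s ≤ q := occt_le_of_conf hXconf
  set validP : ℕ × Bool → Prop := fun p =>
    (p.2 = true → 1 ≤ m p.1 ∧ m (p.1 + 1) + 1 ≤ q) ∧
    (p.2 = false → 1 ≤ m (p.1 + 1) ∧ m p.1 + 1 ≤ q) with hvalidP
  set G : ℕ × Bool → ℝ := fun p => wt q L m (hopF m p.1 p.2) with hG
  set P : Finset (ℕ × Bool) :=
    ((Finset.Icc 1 (L - 1)) ×ˢ (Finset.univ : Finset Bool)).filter validP with hP
  set 𝒩 : Finset (Conf q L N) := Finset.univ.filter (fun Y => adjC L m (occt Y.1)) with h𝒩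
  have hsum1 : (∑ Y : Conf q L N, if adjC L m (occt Y.1) then wt q L m (occt Y.1) else 0)
      = ∑ Y ∈ 𝒩, wt q L m (occt Y.1) := (Finset.sum_filter _ _).symm
  rw [hsum1]
  have hQ : ∀ Y, Y ∈ 𝒩 → ∃ p : ℕ × Bool,
      p.1 ∈ Finset.Icc 1 (L - 1) ∧ occt Y.1 = hopF m p.1 p.2 ∧ validP p := by
    intro Y hY
    rw [h𝒩, Finset.mem_filter] at hY
    obtain ⟨j, hj, d, hn, hd1, hd2⟩ := adjC_elim hY.2
    have hYconf : isConf q Y.1 := (Finset.mem_filter.1 Y.2).2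
    have hYocc : ∀ s, occt Y.1 s ≤ q := occt_le_of_conf hYconf
    refine ⟨(j, d), hj, hn, ?_⟩
    rw [hvalidP]
    cases d
    · refine ⟨fun h => by simp at h, fun _ => ⟨hd2 rfl, ?_⟩⟩
      have := hYocc j
      rw [hn, hopF_self_f] at this
      exact this
    · refine ⟨fun _ => ⟨hd1 rfl, ?_⟩, fun h => by simp at h⟩
      have := hYocc (j + 1)
      rw [hn, hopF_succ_t] at this
      exact this
  choose! pfun hp1 hp2 hp3 using hQ
  have hinj : ∀ Y ∈ 𝒩, ∀ Z ∈ 𝒩, pfun Y = pfun Z → Y = Z := by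
    intro Y hY Z hZ hp
    have hYconf : isConf q Y.1 := (Finset.mem_filter.1 Y.2).2
    have hZconf : isConf q Z.1 := (Finset.mem_filter.1 Z.2).2
    have hocceq : occt Y.1 = occt Z.1 := by
      rw [hp2 Y hY, hp2 Z hZ, hp]
    exact Subtype.ext (monotone_eq_of_occt hYconf.1 hZconf.1 hocceq)
  have himg : ∑ Y ∈ 𝒩, wt q L m (occt Y.1) = ∑ p ∈ 𝒩.image pfun, G p := by
    rw [Finset.sum_image hinj]
    refine Finset.sum_congr rfl fun Y hY => ?_
    rw [hG]
    simp only
    rw [← hp2 Y hY]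
  rw [himg]
  have hsub : 𝒩.image pfun ⊆ P := by
    refine Finset.image_subset_iff.2 fun Y hY => ?_
    rw [hP, Finset.mem_filter, Finset.mem_product]
    exact ⟨⟨hp1 Y hY, Finset.mem_univ _⟩, hp3 Y hY⟩
  have hle1 : ∑ p ∈ 𝒩.image pfun, G p ≤ ∑ p ∈ P, G p :=
    Finset.sum_le_sum_of_subset_of_nonneg hsub (fun p _ _ => wt_nonneg q L m _)
  have hle2 : ∑ p ∈ P, G p ≤ ∑ j ∈ Finset.Icc 1 (L - 1),
      2 * (q : ℝ) * ((q : ℝ) / 2 * ((m j : ℝ) + (m (j + 1) : ℝ)) - (m j : ℝ) * (m (j + 1) : ℝ)) := by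
    rw [hP, Finset.sum_filter, Finset.sum_product]
    refine Finset.sum_le_sum fun j hj => ?_
    rw [Fintype.sum_bool]
    have haj : (m j : ℝ) ≤ q := by exact_mod_cast hocc j
    have hbj : (m (j + 1) : ℝ) ≤ q := by exact_mod_cast hocc (j + 1)
    have ha0 : (0 : ℝ) ≤ m j := Nat.cast_nonneg _
    have hb0 : (0 : ℝ) ≤ m (j + 1) := Nat.cast_nonneg _
    have hq0 : (0 : ℝ) ≤ q := Nat.cast_nonneg _
    have hbt : (if validP (j, true) then G (j, true) else 0)
        ≤ (q : ℝ) * (m j : ℝ) * ((q : ℝ) - (m (j + 1) : ℝ)) := by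
      split_ifs with h
      · obtain ⟨h1, h2⟩ := h.1 rfl
        rw [hG]
        simp only
        rw [wt_hop_t m hj hL h1]
        exact sqrt_bound hq h1 (hocc j) h2
      · exact mul_nonneg (mul_nonneg hq0 ha0) (by linarith)
    have hbf : (if validP (j, false) then G (j, false) else 0)
        ≤ (q : ℝ) * (m (j + 1) : ℝ) * ((q : ℝ) - (m j : ℝ)) := by
      split_ifs with h
      · obtain ⟨h1, h2⟩ := h.2 rfl
        rw [hG]
        simp only
        rw [wt_hop_f m hj hL h1]
        rw [mul_comm]
        have := sqrt_bound hq h1 (hocc (j + 1)) h2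
        calc Real.sqrt ((m (j + 1) : ℝ) * ((q : ℝ) - (m (j + 1)) + 1))
              * Real.sqrt (((m j : ℝ) + 1) * ((q : ℝ) - m j)) ≤ _ := this
          _ = (q : ℝ) * (m (j + 1) : ℝ) * ((q : ℝ) - (m j : ℝ)) := rfl
      · exact mul_nonneg (mul_nonneg hq0 hb0) (by linarith)
    have : (q : ℝ) * (m j : ℝ) * ((q : ℝ) - (m (j + 1) : ℝ))
        + (q : ℝ) * (m (j + 1) : ℝ) * ((q : ℝ) - (m j : ℝ))
        = 2 * (q : ℝ) * ((q : ℝ) / 2 * ((m j : ℝ) + (m (j + 1) : ℝ))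
            - (m j : ℝ) * (m (j + 1) : ℝ)) := by ring
    exact le_trans (add_le_add hbt hbf) (le_of_eq this)
  have hle3 : ∑ j ∈ Finset.Icc 1 (L - 1),
      2 * (q : ℝ) * ((q : ℝ) / 2 * ((m j : ℝ) + (m (j + 1) : ℝ)) - (m j : ℝ) * (m (j + 1) : ℝ))
      ≤ 2 * (q : ℝ) * potV q L m := by
    rw [← Finset.mul_sum]
    have hbd : 0 ≤ (q : ℝ) / 2 * ((m 1 : ℝ) + (m L : ℝ)) := by
      have := Nat.cast_nonneg (α := ℝ) (m 1)
      have := Nat.cast_nonneg (α := ℝ) (m L)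
      have hq0 : (0 : ℝ) ≤ q := Nat.cast_nonneg _
      positivity
    have hsumle : (∑ j ∈ Finset.Icc 1 (L - 1),
        ((q : ℝ) / 2 * ((m j : ℝ) + (m (j + 1) : ℝ)) - (m j : ℝ) * (m (j + 1) : ℝ)))
        ≤ potV q L m := by
      unfold potV
      linarith
    have h2q : (0 : ℝ) ≤ 2 * (q : ℝ) := by positivity
    exact mul_le_mul_of_nonneg_left hsumle h2q
  linarith

end DropletAux
namespace DropletAux

open Finset

lemma re_ofReal_mul_conj (r : ℝ) (z : ℂ) :
    (((r : ℝ) : ℂ) * ((starRingEnd ℂ) z * z)).re = r * Complex.normSq z := by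
  rw [mul_comm ((starRingEnd ℂ) z) z, Complex.mul_conj, ← Complex.ofReal_mul, Complex.ofReal_re]

lemma cross_re_le (z w : ℂ) :
    ((starRingEnd ℂ) z * w).re ≤ (Complex.normSq z + Complex.normSq w) / 2 := by
  have h1 := Complex.re_le_norm ((starRingEnd ℂ) z * w)
  rw [norm_mul, Complex.norm_conj] at h1
  nlinarith [Complex.sq_norm z, Complex.sq_norm w, sq_nonneg (‖z‖ - ‖w‖),
    norm_nonneg z, norm_nonneg w]

end DropletAux

open DropletAux

set_option maxHeartbeats 1600000 in
/-- for `Δ > 2J`, `E ∈ [0, E_{K,δ/2}]`, `γ = (1−2J/Δ)K` and `W` a nonnegative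
diagonal matrix, `⟨f, (H_N + W + γP − E)f⟩ ≥ (1−2J/Δ)(δ/(2(K+1)))⟨f, V_N f⟩` for all `f`;
in particular `H_N + W + γP − E` is positive definite. -/
theorem quadratic_form_lower_bound (twoJ L N K : ℕ) (h2J : 0 < twoJ) (hL : 2 ≤ L)
    (hN1 : 1 ≤ N) (hN2 : N ≤ twoJ * L) (Δ δ E : ℝ) (hΔ : (twoJ : ℝ) < Δ)
    (hδ0 : 0 < δ) (hδ1 : δ < 1) (W : Conf twoJ L N → ℝ) (hW : ∀ X, 0 ≤ W X)
    (hE0 : 0 ≤ E) (hE1 : E ≤ (1 - (twoJ : ℝ) / Δ) * ((K : ℝ) + 1 - δ / 2)) :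
    (∀ f : Conf twoJ L N → ℂ,
      (1 - (twoJ : ℝ) / Δ) * (δ / (2 * ((K : ℝ) + 1))) *
          (star f ⬝ᵥ ((Vdiag twoJ L N).mulVec f)).re
        ≤ (star f ⬝ᵥ ((Ham twoJ L N Δ + Matrix.diagonal (fun X => ((W X : ℝ) : ℂ))
            + ((((1 - (twoJ : ℝ) / Δ) * (K : ℝ)) : ℝ) : ℂ) • projLK twoJ L N K
            - (E : ℂ) • 1).mulVec f)).re)
    ∧ (Ham twoJ L N Δ + Matrix.diagonal (fun X => ((W X : ℝ) : ℂ))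
        + ((((1 - (twoJ : ℝ) / Δ) * (K : ℝ)) : ℝ) : ℂ) • projLK twoJ L N K
        - (E : ℂ) • 1).PosDef := by
  classical
  have hΔ0 : (0 : ℝ) < Δ := lt_of_le_of_lt (Nat.cast_nonneg _) hΔ
  have hq1 : (1 : ℝ) ≤ (twoJ : ℝ) := by exact_mod_cast h2J
  have hη : 0 < 1 - (twoJ : ℝ) / Δ := by
    have : (twoJ : ℝ) / Δ < 1 := (div_lt_one hΔ0).2 hΔ
    linarith
  set Mmat := Ham twoJ L N Δ + Matrix.diagonal (fun X => ((W X : ℝ) : ℂ))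
      + ((((1 - (twoJ : ℝ) / Δ) * (K : ℝ)) : ℝ) : ℂ) • projLK twoJ L N K
      - (E : ℂ) • 1 with hMdef
  set VR : Conf twoJ L N → ℝ := fun X => potV twoJ L (occt X.1) with hVRdef
  set wR : Conf twoJ L N → Conf twoJ L N → ℝ := fun X Y =>
    if adjC L (occt X.1) (occt Y.1) then wt twoJ L (occt X.1) (occt Y.1) else 0 with hwRdef
  set dd : Conf twoJ L N → ℝ := fun X =>
    VR X + W X + (if VR X ≤ (K : ℝ) then (1 - (twoJ : ℝ) / Δ) * K else 0) - E with hdddef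
  have hwnn : ∀ X Y, 0 ≤ wR X Y := by
    intro X Y
    rw [hwRdef]
    dsimp only
    split_ifs
    · exact wt_nonneg _ _ _ _
    · exact le_rfl
  have hwsymm : ∀ X Y, wR X Y = wR Y X := by
    intro X Y
    rw [hwRdef]
    dsimp only
    by_cases h : adjC L (occt X.1) (occt Y.1)
    · rw [if_pos h, if_pos (adjC_symm h), wt_symm]
    · rw [if_neg h, if_neg (fun h' => h (adjC_symm h'))]
  have hconf : ∀ X : Conf twoJ L N, isConf twoJ X.1 := fun X => (Finset.mem_filter.1 X.2).2
  have hV1 : ∀ X, 1 ≤ VR X := fun X => potV_ge_one h2J hL hN1 (hconf X)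
  have hVgt : ∀ X, ¬ VR X ≤ (K : ℝ) → (K : ℝ) + 1 ≤ VR X := fun X h => potV_gt_imp hL X.1 h
  have hS : ∀ X, (∑ Y, wR X Y) ≤ 2 * (twoJ : ℝ) * VR X := fun X => S_bound twoJ L N h2J hL X
  -- entrywise formula for the matrix
  have hM : ∀ X Y, Mmat X Y = ((-(1 / (2 * Δ)) * wR X Y : ℝ) : ℂ)
      + (if X = Y then ((dd X : ℝ) : ℂ) else 0) := by
    intro X Y
    have hirr := adjC_irrefl L (occt X.1)
    rw [hMdef, hdddef, hwRdef, hVRdef]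
    simp only [Matrix.add_apply, Matrix.sub_apply, Matrix.smul_apply, Matrix.one_apply,
      Matrix.diagonal_apply, Ham, projLK, smul_eq_mul]
    by_cases hxy : X = Y
    · subst hxy
      by_cases hvk : potV twoJ L (occt X.1) ≤ (K : ℝ)
      · simp only [hirr, if_false, if_true, ite_true, ite_false, if_pos hvk, if_pos rfl]
        push_cast
        ring
      · simp only [hirr, if_false, if_true, ite_true, ite_false, if_neg hvk, if_pos rfl]
        push_cast
        ring
    · by_cases hadj : adjC L (occt X.1) (occt Y.1)
      · simp only [if_neg hxy, if_pos hadj]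
        push_cast
        ring
      · simp only [if_neg hxy, if_neg hadj]
        push_cast
        ring
  -- splitting the quadratic form
  have hsplit : ∀ f : Conf twoJ L N → ℂ, star f ⬝ᵥ Mmat.mulVec f
      = (∑ X, ∑ Y, ((-(1 / (2 * Δ)) * wR X Y : ℝ) : ℂ) * ((starRingEnd ℂ) (f X) * f Y))
        + ∑ X, ((dd X : ℝ) : ℂ) * ((starRingEnd ℂ) (f X) * f X) := by
    intro f
    have e0 : star f ⬝ᵥ Mmat.mulVec f
        = ∑ X, (starRingEnd ℂ) (f X) * ∑ Y, Mmat X Y * f Y := by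
      simp [dotProduct, Matrix.mulVec, Pi.star_apply, Complex.star_def]
    rw [e0]
    have e1 : ∀ X, (starRingEnd ℂ) (f X) * ∑ Y, Mmat X Y * f Y
        = (∑ Y, ((-(1 / (2 * Δ)) * wR X Y : ℝ) : ℂ) * ((starRingEnd ℂ) (f X) * f Y))
          + ((dd X : ℝ) : ℂ) * ((starRingEnd ℂ) (f X) * f X) := by
      intro X
      rw [Finset.mul_sum]
      have e2 : ∀ Y, (starRingEnd ℂ) (f X) * (Mmat X Y * f Y)
          = ((-(1 / (2 * Δ)) * wR X Y : ℝ) : ℂ) * ((starRingEnd ℂ) (f X) * f Y)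
            + (if X = Y then ((dd X : ℝ) : ℂ) * ((starRingEnd ℂ) (f X) * f Y) else 0) := by
        intro Y
        rw [hM X Y]
        split_ifs with h
        · ring
        · ring
      rw [Finset.sum_congr rfl (fun Y _ => e2 Y), Finset.sum_add_distrib,
        Finset.sum_ite_eq Finset.univ X
          (fun Y => ((dd X : ℝ) : ℂ) * ((starRingEnd ℂ) (f X) * f Y)),
        if_pos (Finset.mem_univ X)]
    rw [Finset.sum_congr rfl (fun X _ => e1 X), Finset.sum_add_distrib]
  -- real part of the quadratic form
  have hre : ∀ f : Conf twoJ L N → ℂ, (star f ⬝ᵥ Mmat.mulVec f).re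
      = (∑ X, ∑ Y, (-(1 / (2 * Δ)) * wR X Y) * ((starRingEnd ℂ) (f X) * f Y).re)
        + ∑ X, dd X * Complex.normSq (f X) := by
    intro f
    rw [hsplit f, Complex.add_re, Complex.re_sum, Complex.re_sum]
    congr 1
    · refine Finset.sum_congr rfl fun X _ => ?_
      rw [Complex.re_sum]
      exact Finset.sum_congr rfl fun Y _ => Complex.re_ofReal_mul _ _
    · exact Finset.sum_congr rfl fun X _ => re_ofReal_mul_conj _ _
  -- the V_N quadratic form
  have hVform : ∀ f : Conf twoJ L N → ℂ, (star f ⬝ᵥ (Vdiag twoJ L N).mulVec f).re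
      = ∑ X, VR X * Complex.normSq (f X) := by
    intro f
    have e0 : star f ⬝ᵥ (Vdiag twoJ L N).mulVec f
        = ∑ X, ((VR X : ℝ) : ℂ) * ((starRingEnd ℂ) (f X) * f X) := by
      simp only [dotProduct, Vdiag, Matrix.mulVec_diagonal, Pi.star_apply,
        Complex.star_def, hVRdef]
      exact Finset.sum_congr rfl fun X _ => by ring
    rw [e0, Complex.re_sum]
    exact Finset.sum_congr rfl fun X _ => re_ofReal_mul_conj _ _
  -- main lower bound on the quadratic form
  have hlower : ∀ f : Conf twoJ L N → ℂ,
      (∑ X, (dd X - (twoJ : ℝ) / Δ * VR X) * Complex.normSq (f X))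
        ≤ (star f ⬝ᵥ Mmat.mulVec f).re := by
    intro f
    rw [hre f]
    set g : Conf twoJ L N → ℝ := fun X => Complex.normSq (f X) with hgdef
    have hg0 : ∀ X, 0 ≤ g X := fun X => Complex.normSq_nonneg _
    have step1 : ∀ X Y, -(1 / (2 * Δ)) * wR X Y * ((g X + g Y) / 2)
        ≤ (-(1 / (2 * Δ)) * wR X Y) * ((starRingEnd ℂ) (f X) * f Y).re := by
      intro X Y
      have hc : 0 ≤ 1 / (2 * Δ) * wR X Y := mul_nonneg (by positivity) (hwnn X Y)
      have h2 := mul_le_mul_of_nonneg_left (cross_re_le (f X) (f Y)) hc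
      nlinarith [h2]
    have sum1 : ∑ X, ∑ Y, -(1 / (2 * Δ)) * wR X Y * ((g X + g Y) / 2)
        ≤ ∑ X, ∑ Y, (-(1 / (2 * Δ)) * wR X Y) * ((starRingEnd ℂ) (f X) * f Y).re :=
      Finset.sum_le_sum fun X _ => Finset.sum_le_sum fun Y _ => step1 X Y
    have ea : ∑ X, ∑ Y, wR X Y * g Y = ∑ X, (∑ Y, wR X Y) * g X := by
      rw [Finset.sum_comm]
      refine Finset.sum_congr rfl fun X _ => ?_
      rw [Finset.sum_mul]
      exact Finset.sum_congr rfl fun Y _ => by rw [hwsymm X Y]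
    have eb : ∑ X, ∑ Y, wR X Y * g X = ∑ X, (∑ Y, wR X Y) * g X :=
      Finset.sum_congr rfl fun X _ => (Finset.sum_mul _ _ _).symm
    have ec : ∑ X, ∑ Y, -(1 / (2 * Δ)) * wR X Y * ((g X + g Y) / 2)
        = -(1 / (2 * Δ)) * ((∑ X, ∑ Y, wR X Y * g X) / 2 + (∑ X, ∑ Y, wR X Y * g Y) / 2) := by
      have inner : ∀ X : Conf twoJ L N, (∑ Y, -(1 / (2 * Δ)) * wR X Y * ((g X + g Y) / 2))
          = -(1 / (2 * Δ)) * ((∑ Y, wR X Y * g X) / 2 + (∑ Y, wR X Y * g Y) / 2) := by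
        intro X
        calc ∑ Y, -(1 / (2 * Δ)) * wR X Y * ((g X + g Y) / 2)
            = ∑ Y, (-(1 / (2 * Δ)) * (wR X Y * g X / 2)
                + -(1 / (2 * Δ)) * (wR X Y * g Y / 2)) :=
              Finset.sum_congr rfl fun Y _ => by ring
          _ = -(1 / (2 * Δ)) * (∑ Y, wR X Y * g X / 2)
                + -(1 / (2 * Δ)) * (∑ Y, wR X Y * g Y / 2) := by
              rw [Finset.sum_add_distrib, Finset.mul_sum, Finset.mul_sum]
          _ = -(1 / (2 * Δ)) * ((∑ Y, wR X Y * g X) / 2 + (∑ Y, wR X Y * g Y) / 2) := by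
              rw [← Finset.sum_div, ← Finset.sum_div]
              ring
      calc ∑ X, ∑ Y, -(1 / (2 * Δ)) * wR X Y * ((g X + g Y) / 2)
          = ∑ X, (-(1 / (2 * Δ)) * ((∑ Y, wR X Y * g X) / 2 + (∑ Y, wR X Y * g Y) / 2)) :=
            Finset.sum_congr rfl fun X _ => inner X
        _ = -(1 / (2 * Δ)) * ∑ X, ((∑ Y, wR X Y * g X) / 2 + (∑ Y, wR X Y * g Y) / 2) :=
            (Finset.mul_sum _ _ _).symm
        _ = -(1 / (2 * Δ)) * ((∑ X, ∑ Y, wR X Y * g X) / 2 + (∑ X, ∑ Y, wR X Y * g Y) / 2) := by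
            rw [Finset.sum_add_distrib, Finset.sum_div, Finset.sum_div]
    have ee : ∑ X, (∑ Y, wR X Y) * g X ≤ ∑ X, (2 * (twoJ : ℝ) * VR X) * g X :=
      Finset.sum_le_sum fun X _ => mul_le_mul_of_nonneg_right (hS X) (hg0 X)
    have eh : ∑ X, (2 * (twoJ : ℝ) * VR X) * g X = 2 * (twoJ : ℝ) * ∑ X, VR X * g X := by
      rw [Finset.mul_sum]
      exact Finset.sum_congr rfl fun X _ => by ring
    have escal : -(1 / (2 * Δ)) * (2 * (twoJ : ℝ) * ∑ X, VR X * g X)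
        = -((twoJ : ℝ) / Δ) * ∑ X, VR X * g X := by
      field_simp
    have el : ∑ X, (dd X - (twoJ : ℝ) / Δ * VR X) * g X
        = (∑ X, dd X * g X) - (twoJ : ℝ) / Δ * ∑ X, VR X * g X := by
      rw [Finset.mul_sum, ← Finset.sum_sub_distrib]
      exact Finset.sum_congr rfl fun X _ => by ring
    have hfin : -(1 / (2 * Δ)) * ((∑ X, ∑ Y, wR X Y * g X) / 2 + (∑ X, ∑ Y, wR X Y * g Y) / 2)
        ≥ -((twoJ : ℝ) / Δ) * ∑ X, VR X * g X := by
      rw [ea, eb]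
      have h1 : -(1 / (2 * Δ)) * ((∑ X, (∑ Y, wR X Y) * g X) / 2
          + (∑ X, (∑ Y, wR X Y) * g X) / 2) = -(1 / (2 * Δ)) * ∑ X, (∑ Y, wR X Y) * g X := by
        ring
      rw [h1]
      have h2 := mul_le_mul_of_nonneg_left ee (show (0:ℝ) ≤ 1 / (2 * Δ) by positivity)
      rw [eh] at h2
      nlinarith [escal]
    have k1 : -((twoJ : ℝ) / Δ) * ∑ X, VR X * g X
        ≤ ∑ X, ∑ Y, (-(1 / (2 * Δ)) * wR X Y) * ((starRingEnd ℂ) (f X) * f Y).re := by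
      calc -((twoJ : ℝ) / Δ) * ∑ X, VR X * g X
          ≤ -(1 / (2 * Δ)) * ((∑ X, ∑ Y, wR X Y * g X) / 2
            + (∑ X, ∑ Y, wR X Y * g Y) / 2) := hfin
        _ = ∑ X, ∑ Y, -(1 / (2 * Δ)) * wR X Y * ((g X + g Y) / 2) := ec.symm
        _ ≤ _ := sum1
    linarith [k1, el]
  -- pointwise coefficient bound
  have hpt : ∀ X, (1 - (twoJ : ℝ) / Δ) * (δ / (2 * ((K : ℝ) + 1))) * VR X
      ≤ dd X - (twoJ : ℝ) / Δ * VR X := by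
    intro X
    rw [hdddef]
    dsimp only
    have hK0 : (0 : ℝ) ≤ K := Nat.cast_nonneg K
    have hWX := hW X
    have hV1X := hV1 X
    by_cases hvk : VR X ≤ (K : ℝ)
    · rw [if_pos hvk]
      have hinner : δ / (2 * ((K : ℝ) + 1)) * VR X ≤ VR X - 1 + δ / 2 := by
        rw [div_mul_eq_mul_div, div_le_iff₀ (by linarith : (0:ℝ) < 2 * ((K : ℝ) + 1))]
        nlinarith [mul_nonneg hδ0.le (show (0:ℝ) ≤ (K : ℝ) + 1 - VR X by linarith),
          mul_nonneg (show (0:ℝ) ≤ 2 * ((K : ℝ) + 1) by linarith)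
            (show (0:ℝ) ≤ VR X - 1 by linarith)]
      have h3 := mul_le_mul_of_nonneg_left hinner hη.le
      nlinarith [hE1, hη]
    · rw [if_neg hvk]
      have hVK := hVgt X hvk
      have hinner : δ / (2 * ((K : ℝ) + 1)) * VR X ≤ VR X - ((K : ℝ) + 1) + δ / 2 := by
        rw [div_mul_eq_mul_div, div_le_iff₀ (by linarith : (0:ℝ) < 2 * ((K : ℝ) + 1))]
        nlinarith [mul_nonneg (show (0:ℝ) ≤ 2 * ((K : ℝ) + 1) - δ by linarith)
          (show (0:ℝ) ≤ VR X - ((K : ℝ) + 1) by linarith)]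
      have h3 := mul_le_mul_of_nonneg_left hinner hη.le
      nlinarith [hE1, hη]
  -- the first conjunct
  have hmain : ∀ f : Conf twoJ L N → ℂ,
      (1 - (twoJ : ℝ) / Δ) * (δ / (2 * ((K : ℝ) + 1))) *
        (star f ⬝ᵥ (Vdiag twoJ L N).mulVec f).re ≤ (star f ⬝ᵥ Mmat.mulVec f).re := by
    intro f
    rw [hVform f]
    have h1 : (1 - (twoJ : ℝ) / Δ) * (δ / (2 * ((K : ℝ) + 1))) * ∑ X, VR X * Complex.normSq (f X)
        = ∑ X, ((1 - (twoJ : ℝ) / Δ) * (δ / (2 * ((K : ℝ) + 1))) * VR X) * Complex.normSq (f X) := by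
      rw [Finset.mul_sum]
      exact Finset.sum_congr rfl fun X _ => by ring
    rw [h1]
    refine le_trans (Finset.sum_le_sum fun X _ => ?_) (hlower f)
    exact mul_le_mul_of_nonneg_right (hpt X) (Complex.normSq_nonneg _)
  -- Hermitian
  have hherm : Mmat.IsHermitian := by
    refine Matrix.IsHermitian.ext fun X Y => ?_
    rw [hM Y X, hM X Y]
    simp only [Complex.star_def, map_add, Complex.conj_ofReal, apply_ite (starRingEnd ℂ), map_zero]
    rw [hwsymm Y X]
    by_cases hxy : X = Y
    · subst hxy
      simp
    · rw [if_neg hxy, if_neg (fun h => hxy h.symm)]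
  have hcc : ∀ X Y, (starRingEnd ℂ) (Mmat X Y) = Mmat Y X := by
    intro X Y
    have h := hherm.apply Y X
    simpa [Complex.star_def] using h
  -- the quadratic form is real
  have him : ∀ f : Conf twoJ L N → ℂ, (star f ⬝ᵥ Mmat.mulVec f).im = 0 := by
    intro f
    rw [← Complex.conj_eq_iff_im]
    have e0 : star f ⬝ᵥ Mmat.mulVec f
        = ∑ X, ∑ Y, (starRingEnd ℂ) (f X) * (Mmat X Y * f Y) := by
      simp [dotProduct, Matrix.mulVec, Pi.star_apply, Complex.star_def, Finset.mul_sum]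
    rw [e0, map_sum]
    calc ∑ X, (starRingEnd ℂ) (∑ Y, (starRingEnd ℂ) (f X) * (Mmat X Y * f Y))
        = ∑ X, ∑ Y, (starRingEnd ℂ) (f Y) * (Mmat Y X * f X) := by
          refine Finset.sum_congr rfl fun X _ => ?_
          rw [map_sum]
          refine Finset.sum_congr rfl fun Y _ => ?_
          rw [_root_.map_mul, _root_.map_mul, Complex.conj_conj, hcc X Y]
          ring
      _ = ∑ X, ∑ Y, (starRingEnd ℂ) (f X) * (Mmat X Y * f Y) := Finset.sum_comm
  refine ⟨hmain, Matrix.posDef_iff_dotProduct_mulVec.2 ⟨hherm, fun x hx => ?_⟩⟩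
  rw [Complex.lt_def]
  constructor
  · simp only [Complex.zero_re]
    obtain ⟨X0, hX0⟩ := Function.ne_iff.1 hx
    have hgpos : 0 < Complex.normSq (x X0) := Complex.normSq_pos.2 hX0
    have hc0 : 0 < (1 - (twoJ : ℝ) / Δ) * (δ / (2 * ((K : ℝ) + 1))) := by
      have hK1 : (0 : ℝ) < 2 * ((K : ℝ) + 1) := by positivity
      exact mul_pos hη (div_pos hδ0 hK1)
    have hcoef : ∀ X, 0 < dd X - (twoJ : ℝ) / Δ * VR X := by
      intro X
      have h0 : 0 < (1 - (twoJ : ℝ) / Δ) * (δ / (2 * ((K : ℝ) + 1))) * VR X :=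
        mul_pos hc0 (lt_of_lt_of_le one_pos (hV1 X))
      exact lt_of_lt_of_le h0 (hpt X)
    have h1 : ∀ X, 0 ≤ (dd X - (twoJ : ℝ) / Δ * VR X) * Complex.normSq (x X) :=
      fun X => mul_nonneg (hcoef X).le (Complex.normSq_nonneg _)
    have h2 : (dd X0 - (twoJ : ℝ) / Δ * VR X0) * Complex.normSq (x X0)
        ≤ ∑ X, (dd X - (twoJ : ℝ) / Δ * VR X) * Complex.normSq (x X) :=
      Finset.single_le_sum (fun X _ => h1 X) (Finset.mem_univ X0)
    have h3 : 0 < (dd X0 - (twoJ : ℝ) / Δ * VR X0) * Complex.normSq (x X0) :=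
      mul_pos (hcoef X0) hgpos
    exact lt_of_lt_of_le h3 (le_trans h2 (hlower x))
  · simp only [Complex.zero_im]
    exact (him x).symm
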